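/- (Walsh's Coincidence Theorem) Let D ⊆ ℂ be a circular domain and let f be a monic complex polynomial of degree n ≥ 1 that has no zeros in D. Then Sym_n(f) has no zeros in Dⁿ, i.e. for all (y₁,…,yₙ) ∈ Dⁿ one has Sym_n(f)(y₁,…,yₙ) ≠ 0. -/

import Mathlib

open Polynomial

/-- The apolarity form `[f,g]_m`. -/
noncomputable def apol (m : ℕ) (f g : Polynomial ℂ) : ℂ :=
  ∑ k ∈ Finset.range (m + 1),
    (-1 : ℂ) ^ k * ((m.choose k : ℂ))⁻¹ * f.coeff k * g.coeff (m - k)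

/-- The symmetrization `Sym_N(f)` of a polynomial, as a function on `ι → ℂ`
with `N = card ι`. -/
noncomputable def symFun {ι : Type*} [Fintype ι] (f : Polynomial ℂ) (y : ι → ℂ) : ℂ :=
  ∑ k ∈ Finset.range (Fintype.card ι + 1),
    (((Fintype.card ι).choose k : ℂ))⁻¹ * f.coeff k *
      MvPolynomial.eval y (MvPolynomial.esymm ι ℂ k)

/-- A circular domain: an open or closed disk or half-plane, or a complement thereof. -/
def IsCircularDomain (D : Set ℂ) : Prop :=
  ∃ (α γ : ℝ) (β : ℂ),
    D = {z : ℂ | α * Complex.normSq z + ((starRingEnd ℂ) β * z).re + γ < 0} ∨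
    D = {z : ℂ | α * Complex.normSq z + ((starRingEnd ℂ) β * z).re + γ ≤ 0}

/-- `q_∘(D) = {u : q⁻¹(u) ⊆ D}`. -/
def innerImage (q : Polynomial ℂ) (D : Set ℂ) : Set ℂ :=
  {u : ℂ | ∀ z : ℂ, q.eval z = u → z ∈ D}

/-- `S_{q,n}(f)(u₁,…,uₙ) = [f∘q, ∏ⱼ (q - uⱼ)]_{nd}`. -/
noncomputable def Sfun (q : Polynomial ℂ) (n : ℕ) (f : Polynomial ℂ) (u : Fin n → ℂ) : ℂ :=
  apol (n * q.natDegree) (f.comp q) (∏ j, (q - Polynomial.C (u j)))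

/-- The Fischer inner product `⟨f,g⟩_n`. -/
noncomputable def fischer (n : ℕ) (f g : Polynomial ℂ) : ℂ :=
  ∑ k ∈ Finset.range (n + 1),
    ((n.choose k : ℂ))⁻¹ * f.coeff k * (starRingEnd ℂ) (g.coeff k)


namespace WalshAux
open Complex

noncomputable def Bp (n : ℕ) (f g : Polynomial ℂ) : Polynomial ℂ :=
  ∑ k ∈ Finset.range (n + 1),
    Polynomial.C ((-1 : ℂ) ^ k) * (derivative^[k] f * derivative^[n - k] g)

lemma derivative_Bp {n : ℕ} {f g : Polynomial ℂ} (hf : f.natDegree ≤ n)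
    (hg : g.natDegree ≤ n) : derivative (Bp n f g) = 0 := by
  have hF : derivative^[n+1] f = 0 := iterate_derivative_eq_zero (Nat.lt_succ_of_le hf)
  have hG : derivative^[n+1] g = 0 := iterate_derivative_eq_zero (Nat.lt_succ_of_le hg)
  set T : ℕ → Polynomial ℂ :=
    fun k => C ((-1:ℂ)^k) * (derivative^[k] f * derivative^[n+1-k] g) with hT
  have key : derivative (Bp n f g) = ∑ k ∈ Finset.range (n+1), (T k - T (k+1)) := by
    unfold Bp
    rw [derivative_sum]
    apply Finset.sum_congr rfl
    intro k hk
    have hk' : k ≤ n := Nat.lt_succ_iff.mp (Finset.mem_range.mp hk)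
    rw [derivative_C_mul, derivative_mul]
    have h1 : derivative (derivative^[k] f) = derivative^[k+1] f :=
      (Function.iterate_succ_apply' _ _ _).symm
    have h2 : derivative (derivative^[n-k] g) = derivative^[n+1-k] g := by
      rw [← Function.iterate_succ_apply' derivative (n-k) g]
      congr 1
      omega
    rw [h1, h2]
    have h5 : n + 1 - (k+1) = n - k := by omega
    simp only [hT, h5, pow_succ, map_mul, map_neg, map_one]
    ring
  rw [key, Finset.sum_range_sub' T]
  have hT0 : T 0 = 0 := by simp [hT, hG]
  have hTn : T (n+1) = 0 := by simp [hT, hF]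
  rw [hT0, hTn, sub_zero]

lemma Bp_eval_eq {n : ℕ} {f g : Polynomial ℂ} (hf : f.natDegree ≤ n)
    (hg : g.natDegree ≤ n) (a b : ℂ) :
    (Bp n f g).eval a = (Bp n f g).eval b := by
  have h := eq_C_of_derivative_eq_zero (derivative_Bp hf hg)
  rw [h]; simp

lemma neg_one_pow_sub {n k : ℕ} (hk : k ≤ n) :
    (-1:ℂ)^(n-k) = (-1:ℂ)^n * (-1:ℂ)^k := by
  have h : (-1:ℂ)^(n-k) * (-1:ℂ)^k = (-1:ℂ)^n := by
    rw [← pow_add]; congr 1; omega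
  have h2 : ((-1:ℂ)^k) * ((-1:ℂ)^k) = 1 := by
    rw [← pow_add]; exact Even.neg_one_pow ⟨k, rfl⟩
  calc (-1:ℂ)^(n-k) = (-1:ℂ)^(n-k) * (((-1:ℂ)^k) * ((-1:ℂ)^k)) := by rw [h2, mul_one]
    _ = ((-1:ℂ)^(n-k) * (-1:ℂ)^k) * (-1:ℂ)^k := by ring
    _ = (-1:ℂ)^n * (-1:ℂ)^k := by rw [h]

lemma Bp_swap (n : ℕ) (f g : Polynomial ℂ) :
    Bp n g f = C ((-1:ℂ)^n) * Bp n f g := by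
  unfold Bp
  rw [Finset.mul_sum]
  rw [← Finset.sum_range_reflect (fun k => C ((-1:ℂ)^k) * (derivative^[k] g * derivative^[n-k] f)) (n+1)]
  apply Finset.sum_congr rfl
  intro k hk
  have hk' : k ≤ n := Nat.lt_succ_iff.mp (Finset.mem_range.mp hk)
  have h1 : n + 1 - 1 - k = n - k := by omega
  have h2 : n - (n - k) = k := by omega
  rw [h1, h2, neg_one_pow_sub hk']
  simp only [map_mul]
  ring


lemma Bp_eval_zero (n : ℕ) (f g : Polynomial ℂ) :
    (Bp n f g).eval 0 = (n.factorial : ℂ) * apol n f g := by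
  unfold Bp apol
  rw [eval_finset_sum, Finset.mul_sum]
  apply Finset.sum_congr rfl
  intro k hk
  have hk' : k ≤ n := Nat.lt_succ_iff.mp (Finset.mem_range.mp hk)
  rw [eval_mul, eval_C, eval_mul]
  rw [← coeff_zero_eq_eval_zero, ← coeff_zero_eq_eval_zero,
    coeff_iterate_derivative, coeff_iterate_derivative]
  simp only [zero_add, Nat.descFactorial_self, nsmul_eq_mul]
  have hc : (n.choose k : ℂ) ≠ 0 := Nat.cast_ne_zero.mpr (Nat.choose_pos hk').ne'
  have hfac : (n.choose k : ℂ) * ((k.factorial : ℂ) * ((n-k).factorial : ℂ)) = (n.factorial : ℂ) := by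
    rw [← mul_assoc]
    exact_mod_cast congrArg (Nat.cast (R := ℂ)) (Nat.choose_mul_factorial_mul_factorial hk')
  field_simp
  linear_combination f.coeff k * g.coeff (n-k) * hfac

lemma iterate_derivative_linear_mul (ρ : ℂ) (h : Polynomial ℂ) (m : ℕ) :
    derivative^[m+1] ((X - C ρ) * h) =
      (X - C ρ) * derivative^[m+1] h + C ((m : ℂ)+1) * derivative^[m] h := by
  induction m with
  | zero =>
      simp only [Function.iterate_one, Function.iterate_zero, id_eq, derivative_mul,
        derivative_sub, derivative_X, derivative_C, sub_zero, one_mul, Nat.cast_zero, zero_add,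
        map_one]
      ring
  | succ m ih =>
      rw [Function.iterate_succ_apply' derivative (m+1) ((X - C ρ) * h), ih, derivative_add,
        derivative_mul, derivative_mul, derivative_C, derivative_sub, derivative_X, derivative_C,
        sub_zero, one_mul, zero_mul, zero_add,
        ← Function.iterate_succ_apply' derivative (m+1) h,
        ← Function.iterate_succ_apply' derivative m h]
      simp only [Nat.succ_eq_add_one, Nat.cast_add, Nat.cast_one, map_add, map_one]
      ring

lemma eval_iterate_derivative_linear_mul (ρ : ℂ) (h : Polynomial ℂ) (m : ℕ) :
    eval ρ (derivative^[m+1] ((X - C ρ) * h)) = ((m:ℂ)+1) * eval ρ (derivative^[m] h) := by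
  rw [iterate_derivative_linear_mul]
  simp

lemma iterate_derivative_polar (a ρ : ℂ) (g : Polynomial ℂ) (k : ℕ) :
    derivative^[k] (C a * g + (C ρ - X) * derivative g) =
      C (a - k) * derivative^[k] g + (C ρ - X) * derivative^[k+1] g := by
  induction k with
  | zero => simp
  | succ k ih =>
      rw [Function.iterate_succ_apply' derivative k (C a * g + (C ρ - X) * derivative g), ih,
        derivative_add, derivative_mul, derivative_mul, derivative_C, derivative_sub,
        derivative_X, derivative_C, zero_mul, zero_add,
        ← Function.iterate_succ_apply' derivative (k+1) g,
        ← Function.iterate_succ_apply' derivative k g]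
      simp only [Nat.succ_eq_add_one, Nat.cast_add, Nat.cast_one, map_sub, map_add, map_one]
      ring

lemma eval_iterate_derivative_polar (a ρ : ℂ) (g : Polynomial ℂ) (k : ℕ) :
    eval ρ (derivative^[k] (C a * g + (C ρ - X) * derivative g)) =
      (a - k) * eval ρ (derivative^[k] g) := by
  rw [iterate_derivative_polar]
  simp

lemma Bp_polar_eval (n : ℕ) (f h : Polynomial ℂ) (ρ : ℂ) :
    (Bp (n+1) f ((X - C ρ) * h)).eval ρ =
      (Bp n (C ((n:ℂ)+1) * f + (C ρ - X) * derivative f) h).eval ρ := by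
  unfold Bp
  rw [eval_finset_sum, eval_finset_sum]
  rw [Finset.sum_range_succ]
  have hlast : eval ρ (C ((-1:ℂ)^(n+1)) *
      (derivative^[n+1] f * derivative^[n+1-(n+1)] ((X - C ρ) * h))) = 0 := by
    simp [Nat.sub_self]
  rw [hlast, add_zero]
  apply Finset.sum_congr rfl
  intro k hk
  have hk' : k ≤ n := Nat.lt_succ_iff.mp (Finset.mem_range.mp hk)
  have h1 : (n+1) - k = (n - k) + 1 := by omega
  rw [h1, eval_mul, eval_mul, eval_C, eval_iterate_derivative_linear_mul,
    eval_mul, eval_mul, eval_C, eval_iterate_derivative_polar]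
  have h2 : ((n - k : ℕ) : ℂ) = (n:ℂ) - (k:ℂ) := by
    push_cast [Nat.cast_sub hk']
    ring
  rw [h2]
  ring

lemma eval_derivative_multiset_prod (M : Multiset ℂ) (w : ℂ) (hw : ∀ z ∈ M, w ≠ z) :
    eval w (derivative (M.map (fun r => X - C r)).prod) =
      eval w ((M.map (fun r => X - C r)).prod) * (M.map (fun z => (w - z)⁻¹)).sum := by
  induction M using Multiset.induction with
  | empty => simp
  | cons a M ih =>
      have ha : w - a ≠ 0 := sub_ne_zero.mpr (hw a (Multiset.mem_cons_self a M))
      have hM : ∀ z ∈ M, w ≠ z := fun z hz => hw z (Multiset.mem_cons_of_mem hz)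
      rw [Multiset.map_cons, Multiset.prod_cons, derivative_mul, Multiset.map_cons,
        Multiset.sum_cons]
      simp only [derivative_sub, derivative_X, derivative_C, sub_zero, eval_add, eval_mul,
        eval_one, one_mul, eval_sub, eval_X, eval_C]
      rw [ih hM]
      field_simp


lemma normSq_sum_le (M : Multiset ℂ) :
    normSq M.sum ≤ (Multiset.card M : ℝ) * (M.map normSq).sum := by
  induction M using Multiset.induction with
  | empty => simp
  | cons a M ih =>
      rw [Multiset.sum_cons, Multiset.map_cons, Multiset.sum_cons, Multiset.card_cons]
      have hT : 0 ≤ (M.map normSq).sum := by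
        apply Multiset.sum_nonneg
        intro x hx
        obtain ⟨z, _, rfl⟩ := Multiset.mem_map.mp hx
        exact normSq_nonneg z
      rcases eq_or_ne M 0 with rfl | hM
      · simp
      · have hc : (1:ℝ) ≤ (Multiset.card M : ℝ) := by
          have := Multiset.card_pos.mpr hM
          exact_mod_cast this
        set s := M.sum
        set c := (Multiset.card M : ℝ)
        set T := (M.map normSq).sum
        have hre : (a * (starRingEnd ℂ) s).re ≤ ‖a‖ * ‖s‖ := by
          calc (a * (starRingEnd ℂ) s).re ≤ ‖a * (starRingEnd ℂ) s‖ := re_le_norm _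
            _ = ‖a‖ * ‖s‖ := by rw [norm_mul, norm_conj]
        have hexp : normSq (a + s) = normSq a + 2 * (a * (starRingEnd ℂ) s).re + normSq s := by
          rw [normSq_add]; ring
        have ha2 : ‖a‖ ^ 2 = normSq a := Complex.sq_norm a
        have hs2 : ‖s‖ ^ 2 = normSq s := Complex.sq_norm s
        have hss : normSq s ≤ c * T := ih
        have h0a : 0 ≤ ‖a‖ := norm_nonneg _
        have h0s : 0 ≤ ‖s‖ := norm_nonneg _
        have hcpos : (0:ℝ) < c := lt_of_lt_of_le zero_lt_one hc
        have key : c * normSq (a + s) ≤ c * ((c+1) * (normSq a + T)) := by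
          have e1 : c * normSq (a + s)
              = c * normSq a + 2*c*((a * (starRingEnd ℂ) s).re) + c * normSq s := by
            rw [hexp]; ring
          have e2 : 2*c*((a * (starRingEnd ℂ) s).re) ≤ 2*c*(‖a‖ * ‖s‖) :=
            mul_le_mul_of_nonneg_left hre (by linarith)
          have e3 : 2*c*(‖a‖ * ‖s‖) ≤ c^2 * normSq a + normSq s := by
            nlinarith [sq_nonneg (c * ‖a‖ - ‖s‖), ha2, hs2]
          have e4 : c * normSq s ≤ c * (c * T) := mul_le_mul_of_nonneg_left hss (le_of_lt hcpos)
          nlinarith [e1, e2, e3, e4, hss]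
        have key2 : normSq (a + s) ≤ (c+1) * (normSq a + T) :=
          le_of_mul_le_mul_left key hcpos
        push_cast
        linarith [key2]

lemma re_multiset_sum (M : Multiset ℂ) : M.sum.re = (M.map Complex.re).sum := by
  induction M using Multiset.induction with
  | empty => simp
  | cons a M ih => simp [ih]

lemma core (A c : ℝ) (e : ℂ) (hA : 0 ≤ A) (M : Multiset ℂ) (m : ℕ) (hm : 0 < m)
    (hcard : Multiset.card M ≤ m) :
    (m:ℝ) * (A * normSq (M.sum / (m:ℂ)) + (e * (M.sum / (m:ℂ))).re + c) ≤
      (M.map (fun z => A * normSq z + (e * z).re + c)).sum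
        + ((m:ℝ) - Multiset.card M) * c := by
  have hm0 : ((m:ℂ)) ≠ 0 := Nat.cast_ne_zero.mpr hm.ne'
  have hmR : (0:ℝ) < (m:ℝ) := by exact_mod_cast hm
  -- split the RHS sum
  have hsplit : (M.map (fun z => A * normSq z + (e * z).re + c)).sum
      = A * (M.map normSq).sum + (M.map (fun z => (e * z).re)).sum
        + (Multiset.card M : ℝ) * c := by
    rw [show (fun z : ℂ => A * normSq z + (e * z).re + c)
        = (fun z : ℂ => (A * normSq z + (e * z).re) + c) from rfl]
    rw [Multiset.sum_map_add, Multiset.sum_map_add]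
    simp [Multiset.sum_map_mul_left, Multiset.map_const', mul_comm]
  rw [hsplit]
  -- linear part is exact
  have hlin : (m:ℝ) * ((e * (M.sum / (m:ℂ))).re) = (M.map (fun z => (e * z).re)).sum := by
    have h1 : (e * (M.sum / (m:ℂ))) * (m:ℂ) = e * M.sum := by
      field_simp
    have h2 : ((e * (M.sum / (m:ℂ))) * (m:ℂ)).re = (e * (M.sum / (m:ℂ))).re * (m:ℝ) := by
      simp [Complex.mul_re]
    have h3 : (e * M.sum).re = (M.map (fun z => (e * z).re)).sum := by
      rw [show e * M.sum = (M.map (fun z => e * z)).sum by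
        rw [Multiset.sum_map_mul_left]; simp]
      rw [re_multiset_sum, Multiset.map_map]
      rfl
    rw [mul_comm, ← h2, h1, h3]
  -- quadratic part
  have hquad : (m:ℝ) * (A * normSq (M.sum / (m:ℂ))) ≤ A * (M.map normSq).sum := by
    have h1 : normSq (M.sum / (m:ℂ)) = normSq M.sum / ((m:ℝ) * (m:ℝ)) := by
      rw [normSq_div, normSq_natCast]
    have h2 : normSq M.sum ≤ (m:ℝ) * (M.map normSq).sum := by
      calc normSq M.sum ≤ (Multiset.card M : ℝ) * (M.map normSq).sum := normSq_sum_le M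
        _ ≤ (m:ℝ) * (M.map normSq).sum := by
            apply mul_le_mul_of_nonneg_right _ _
            · exact_mod_cast hcard
            · apply Multiset.sum_nonneg
              intro x hx
              obtain ⟨z, _, rfl⟩ := Multiset.mem_map.mp hx
              exact normSq_nonneg z
    have h3 : (m:ℝ) * (A * (normSq M.sum / ((m:ℝ) * (m:ℝ)))) = A * normSq M.sum / (m:ℝ) := by
      field_simp
    rw [h1, h3, div_le_iff₀ hmR]
    nlinarith [mul_le_mul_of_nonneg_left h2 hA]
  have expand : (m:ℝ) * (A * normSq (M.sum / (m:ℂ)) + (e * (M.sum / (m:ℂ))).re + c)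
      = (m:ℝ) * (A * normSq (M.sum / (m:ℂ))) + (m:ℝ) * ((e * (M.sum / (m:ℂ))).re)
        + (m:ℝ) * c := by ring
  rw [expand]
  have hc' : ((m:ℝ) - Multiset.card M) * c + (Multiset.card M : ℝ) * c = (m:ℝ) * c := by ring
  linarith [hquad, hlin]

/-- The quadratic defining a circular domain. -/
def qf (α γ : ℝ) (β : ℂ) (z : ℂ) : ℝ :=
  α * normSq z + ((starRingEnd ℂ) β * z).re + γ

lemma sum_map_nonpos (M : Multiset ℝ) (h : ∀ x ∈ M, x ≤ 0) : M.sum ≤ 0 := by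
  induction M using Multiset.induction with
  | empty => simp
  | cons a M ih =>
      rw [Multiset.sum_cons]
      have := h a (Multiset.mem_cons_self a M)
      have := ih (fun x hx => h x (Multiset.mem_cons_of_mem hx))
      linarith

lemma coreLt (A c : ℝ) (e : ℂ) (hA : 0 ≤ A) (N : Multiset ℂ) (m : ℕ) (hm : 0 < m)
    (hcard : Multiset.card N ≤ m)
    (hneg : ∀ u ∈ N, A * normSq u + (e * u).re + c < 0)
    (hpad : Multiset.card N < m → c < 0) :
    A * normSq (N.sum / (m:ℂ)) + (e * (N.sum / (m:ℂ))).re + c < 0 := by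
  have hmR : (0:ℝ) < (m:ℝ) := by exact_mod_cast hm
  have h := core A c e hA N m hm hcard
  have hRHS : (N.map (fun z => A * normSq z + (e * z).re + c)).sum
      + ((m:ℝ) - Multiset.card N) * c < 0 := by
    rcases eq_or_lt_of_le hcard with heq | hlt
    · have h0 : ((m:ℝ) - Multiset.card N) = 0 := by
        rw [heq]; ring
      rw [h0, zero_mul, add_zero]
      have hne : N ≠ 0 := by
        intro h0'
        rw [h0'] at heq
        simp at heq
        omega
      obtain ⟨a, ha⟩ := Multiset.exists_mem_of_ne_zero hne
      have : N.map (fun z => A * normSq z + (e * z).re + c)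
          = (A * normSq a + (e * a).re + c) ::ₘ ((N.erase a).map (fun z => A * normSq z + (e * z).re + c)) := by
        conv_lhs => rw [← Multiset.cons_erase ha]
        rw [Multiset.map_cons]
      rw [this, Multiset.sum_cons]
      have h1 := hneg a ha
      have h2 : ((N.erase a).map (fun z => A * normSq z + (e * z).re + c)).sum ≤ 0 := by
        apply sum_map_nonpos
        intro x hx
        obtain ⟨z, hz, rfl⟩ := Multiset.mem_map.mp hx
        exact le_of_lt (hneg z (Multiset.mem_of_mem_erase hz))
      linarith
    · have h1 : (N.map (fun z => A * normSq z + (e * z).re + c)).sum ≤ 0 := by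
        apply sum_map_nonpos
        intro x hx
        obtain ⟨z, hz, rfl⟩ := Multiset.mem_map.mp hx
        exact le_of_lt (hneg z hz)
      have h2 : ((m:ℝ) - Multiset.card N) * c < 0 := by
        apply mul_neg_of_pos_of_neg
        · have : (Multiset.card N : ℝ) < (m:ℝ) := by exact_mod_cast hlt
          linarith
        · exact hpad hlt
      linarith
  nlinarith [h, hRHS, hmR]

lemma coreLe (A c : ℝ) (e : ℂ) (hA : 0 ≤ A) (N : Multiset ℂ) (m : ℕ) (hm : 0 < m)
    (hcard : Multiset.card N ≤ m)
    (hneg : ∀ u ∈ N, A * normSq u + (e * u).re + c ≤ 0)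
    (hpad : Multiset.card N < m → c ≤ 0) :
    A * normSq (N.sum / (m:ℂ)) + (e * (N.sum / (m:ℂ))).re + c ≤ 0 := by
  have hmR : (0:ℝ) < (m:ℝ) := by exact_mod_cast hm
  have h := core A c e hA N m hm hcard
  have hRHS : (N.map (fun z => A * normSq z + (e * z).re + c)).sum
      + ((m:ℝ) - Multiset.card N) * c ≤ 0 := by
    have h1 : (N.map (fun z => A * normSq z + (e * z).re + c)).sum ≤ 0 := by
      apply sum_map_nonpos
      intro x hx
      obtain ⟨z, hz, rfl⟩ := Multiset.mem_map.mp hx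
      exact hneg z hz
    rcases eq_or_lt_of_le hcard with heq | hlt
    · have h0 : ((m:ℝ) - Multiset.card N) = 0 := by rw [heq]; ring
      rw [h0, zero_mul, add_zero]; exact h1
    · have h2 : ((m:ℝ) - Multiset.card N) * c ≤ 0 := by
        apply mul_nonpos_of_nonneg_of_nonpos
        · have : (Multiset.card N : ℝ) < (m:ℝ) := by exact_mod_cast hlt
          linarith
        · exact hpad hlt
      linarith
  nlinarith [h, hRHS, hmR]

lemma psi_identity (α γ : ℝ) (β : ℂ) (w z : ℂ) :
    qf α γ β w + ((-(2*(α:ℂ)*w + β)) * ((starRingEnd ℂ) (w - z))).re + α * normSq (w - z)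
      = qf α γ β z := by
  simp only [qf, normSq_apply, Complex.mul_re, Complex.mul_im, Complex.sub_re, Complex.sub_im,
    Complex.conj_re, Complex.conj_im, Complex.ofReal_re, Complex.ofReal_im, Complex.add_re,
    Complex.add_im, Complex.neg_re, Complex.neg_im, Complex.re_ofNat, Complex.im_ofNat]
  ring

lemma psi_val (α γ : ℝ) (β : ℂ) (w z : ℂ) (h : z ≠ w) :
    qf α γ β w * normSq ((w - z)⁻¹) + ((-(2*(α:ℂ)*w + β)) * (w - z)⁻¹).re + α
      = normSq ((w - z)⁻¹) * qf α γ β z := by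
  have hv : w - z ≠ 0 := sub_ne_zero.mpr (Ne.symm h)
  have hns : normSq (w - z) ≠ 0 := by
    exact ne_of_gt (normSq_pos.mpr hv)
  have key := psi_identity α γ β w z
  set e := -(2*(α:ℂ)*w + β)
  have h1 : normSq ((w - z)⁻¹) = (normSq (w - z))⁻¹ := normSq_inv _
  have h2 : (e * (w - z)⁻¹).re = (e * (starRingEnd ℂ) (w - z)).re * (normSq (w - z))⁻¹ := by
    rw [Complex.inv_def, ← mul_assoc]
    simp [Complex.mul_re, Complex.ofReal_re, Complex.ofReal_im]
  have h3 : (e * (starRingEnd ℂ) (w - z)).re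
      = e.re * (w.re - z.re) + e.im * (w.im - z.im) := by
    simp [Complex.mul_re, Complex.conj_re, Complex.conj_im, Complex.sub_re, Complex.sub_im]
    ring
  rw [h1, h2, h3]
  rw [h3] at key
  field_simp
  linear_combination key


section PQ

variable (α γ : ℝ) (β : ℂ)

/-- The Laguerre-type property, strict version. -/
lemma hP_lt : ∀ (w ζ : ℂ) (m : ℕ) (M : Multiset ℂ), 0 < m → Multiset.card M ≤ m →
    (Multiset.card M = m ∨ α < 0) → (∀ z ∈ M, qf α γ β z < 0) → ¬(qf α γ β w < 0) → ζ ≠ w →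
    (M.map fun z => (w - z)⁻¹).sum = (m : ℂ) * (w - ζ)⁻¹ → qf α γ β ζ < 0 := by
  intro w ζ m M hm hcard hor hmem hw hζw hsum
  have hA : 0 ≤ qf α γ β w := not_lt.mp hw
  set e := -(2*(α:ℂ)*w + β) with he
  set N := M.map (fun z => (w - z)⁻¹) with hN
  have hcN : Multiset.card N ≤ m := by rw [hN, Multiset.card_map]; exact hcard
  have hneg : ∀ u ∈ N, qf α γ β w * normSq u + (e * u).re + α < 0 := by
    intro u hu
    obtain ⟨z, hz, rfl⟩ := Multiset.mem_map.mp hu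
    have hzw : z ≠ w := by
      intro hzw'
      rw [hzw'] at hz
      exact hw (hmem w hz)
    rw [psi_val α γ β w z hzw]
    have hpos : 0 < normSq ((w - z)⁻¹) :=
      normSq_pos.mpr (inv_ne_zero (sub_ne_zero.mpr (Ne.symm hzw)))
    exact mul_neg_of_pos_of_neg hpos (hmem z hz)
  have hpad : Multiset.card N < m → α < 0 := by
    intro hlt
    rcases hor with h | h
    · rw [hN, Multiset.card_map] at hlt
      omega
    · exact h
  have key := coreLt (qf α γ β w) α e hA N m hm hcN hneg hpad
  have hm0 : (m:ℂ) ≠ 0 := Nat.cast_ne_zero.mpr hm.ne'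
  have hNs : N.sum / (m:ℂ) = (w - ζ)⁻¹ := by
    rw [hsum]
    rw [mul_comm, mul_div_assoc, div_self hm0, mul_one]
  rw [hNs, psi_val α γ β w ζ hζw] at key
  have hpos : 0 < normSq ((w - ζ)⁻¹) :=
    normSq_pos.mpr (inv_ne_zero (sub_ne_zero.mpr (Ne.symm hζw)))
  by_contra hcon
  push_neg at hcon
  nlinarith [key, hpos, hcon]

lemma hP_le : ∀ (w ζ : ℂ) (m : ℕ) (M : Multiset ℂ), 0 < m → Multiset.card M ≤ m →
    (Multiset.card M = m ∨ α < 0) → (∀ z ∈ M, qf α γ β z ≤ 0) → ¬(qf α γ β w ≤ 0) → ζ ≠ w →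
    (M.map fun z => (w - z)⁻¹).sum = (m : ℂ) * (w - ζ)⁻¹ → qf α γ β ζ ≤ 0 := by
  intro w ζ m M hm hcard hor hmem hw hζw hsum
  have hA : 0 ≤ qf α γ β w := le_of_lt (not_le.mp hw)
  set e := -(2*(α:ℂ)*w + β) with he
  set N := M.map (fun z => (w - z)⁻¹) with hN
  have hcN : Multiset.card N ≤ m := by rw [hN, Multiset.card_map]; exact hcard
  have hneg : ∀ u ∈ N, qf α γ β w * normSq u + (e * u).re + α ≤ 0 := by
    intro u hu
    obtain ⟨z, hz, rfl⟩ := Multiset.mem_map.mp hu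
    have hzw : z ≠ w := by
      intro hzw'
      rw [hzw'] at hz
      exact hw (hmem w hz)
    rw [psi_val α γ β w z hzw]
    have hpos : 0 < normSq ((w - z)⁻¹) :=
      normSq_pos.mpr (inv_ne_zero (sub_ne_zero.mpr (Ne.symm hzw)))
    exact mul_nonpos_of_nonneg_of_nonpos (le_of_lt hpos) (hmem z hz)
  have hpad : Multiset.card N < m → α ≤ 0 := by
    intro hlt
    rcases hor with h | h
    · rw [hN, Multiset.card_map] at hlt
      omega
    · exact le_of_lt h
  have key := coreLe (qf α γ β w) α e hA N m hm hcN hneg hpad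
  have hm0 : (m:ℂ) ≠ 0 := Nat.cast_ne_zero.mpr hm.ne'
  have hNs : N.sum / (m:ℂ) = (w - ζ)⁻¹ := by
    rw [hsum]
    rw [mul_comm, mul_div_assoc, div_self hm0, mul_one]
  rw [hNs, psi_val α γ β w ζ hζw] at key
  have hpos : 0 < normSq ((w - ζ)⁻¹) :=
    normSq_pos.mpr (inv_ne_zero (sub_ne_zero.mpr (Ne.symm hζw)))
  by_contra hcon
  push_neg at hcon
  nlinarith [key, hpos, hcon]

/-- Convexity property, strict version. -/
lemma hQ_lt (hα : 0 ≤ α) : ∀ (m : ℕ) (M : Multiset ℂ), 0 < m → Multiset.card M = m →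
    (∀ z ∈ M, qf α γ β z < 0) → qf α γ β (M.sum / (m:ℂ)) < 0 := by
  intro m M hm hcardM hmem
  have key := coreLt α γ ((starRingEnd ℂ) β) hα M m hm (le_of_eq hcardM)
    (fun u hu => hmem u hu) (fun h => by omega)
  exact key

lemma hQ_le (hα : 0 ≤ α) : ∀ (m : ℕ) (M : Multiset ℂ), 0 < m → Multiset.card M = m →
    (∀ z ∈ M, qf α γ β z ≤ 0) → qf α γ β (M.sum / (m:ℂ)) ≤ 0 := by
  intro m M hm hcardM hmem
  exact coreLe α γ ((starRingEnd ℂ) β) hα M m hm (le_of_eq hcardM)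
    (fun u hu => hmem u hu) (fun h => by omega)

end PQ

lemma esymm_one_multiset (s : Multiset ℂ) : s.esymm 1 = s.sum := by
  rw [Multiset.esymm, Multiset.powersetCard_one, Multiset.map_map]
  simp

lemma coeff_polar_poly (a ρ : ℂ) (g : Polynomial ℂ) (N : ℕ) (hN : 1 ≤ N) :
    (C a * g + (C ρ - X) * derivative g).coeff N
      = a * g.coeff N + ρ * ((N:ℂ)+1) * g.coeff (N+1) - (N:ℂ) * g.coeff N := by
  obtain ⟨k, rfl⟩ : ∃ k, N = k + 1 := ⟨N-1, by omega⟩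
  rw [coeff_add, coeff_C_mul, sub_mul, coeff_sub, coeff_C_mul, coeff_X_mul,
    coeff_derivative, coeff_derivative]
  push_cast
  ring


section Grace
variable (Dmem : ℂ → Prop) (AN : Prop)

lemma laguerre
    (hP : ∀ (w ζ : ℂ) (m : ℕ) (M : Multiset ℂ), 0 < m → Multiset.card M ≤ m →
      (Multiset.card M = m ∨ AN) → (∀ z ∈ M, Dmem z) → ¬ Dmem w → ζ ≠ w →
      (M.map fun z => (w - z)⁻¹).sum = (m : ℂ) * (w - ζ)⁻¹ → Dmem ζ)
    (hQ : ¬ AN → ∀ (m : ℕ) (M : Multiset ℂ), 0 < m → Multiset.card M = m →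
      (∀ z ∈ M, Dmem z) → Dmem (M.sum / (m:ℂ)))
    (m : ℕ) (hm : 1 ≤ m) (g : Polynomial ℂ) (hg0 : g ≠ 0)
    (hdg : g.natDegree ≤ m + 1)
    (hroots : ∀ r ∈ g.roots, Dmem r) (hor : g.natDegree = m + 1 ∨ AN)
    (ρ : ℂ) (hρ : ¬ Dmem ρ) :
    (C ((m:ℂ)+1) * g + (C ρ - X) * derivative g) ≠ 0 ∧
    (C ((m:ℂ)+1) * g + (C ρ - X) * derivative g).natDegree ≤ m ∧
    (∀ r ∈ (C ((m:ℂ)+1) * g + (C ρ - X) * derivative g).roots, Dmem r) ∧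
    ((C ((m:ℂ)+1) * g + (C ρ - X) * derivative g).natDegree = m ∨ AN) := by
  set g1 := C ((m:ℂ)+1) * g + (C ρ - X) * derivative g with hg1
  have hm1 : ((m:ℂ)+1) ≠ 0 := by
    have h : ((m+1 : ℕ) : ℂ) ≠ 0 := Nat.cast_ne_zero.mpr (Nat.succ_ne_zero m)
    push_cast at h
    exact h
  have heval1 : ∀ w : ℂ, g1.eval w = ((m:ℂ)+1) * g.eval w + (ρ - w) * (derivative g).eval w := by
    intro w
    simp [hg1, eval_add, eval_mul, eval_sub, eval_C, eval_X]
  have hsplits : Multiset.card g.roots = g.natDegree :=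
    (splits_iff_card_roots).mp (IsAlgClosed.splits g)
  have hlc : g.leadingCoeff ≠ 0 := leadingCoeff_ne_zero.mpr hg0
  have hfact : C g.leadingCoeff * (g.roots.map fun a => X - C a).prod = g :=
    C_leadingCoeff_mul_prod_multiset_X_sub_C hsplits
  -- (1) nonzero
  have hg10 : g1 ≠ 0 := by
    intro h0
    have : g1.eval ρ = 0 := by rw [h0]; simp
    rw [heval1 ρ, sub_self, zero_mul, add_zero] at this
    have hgρ : g.eval ρ = 0 := by
      rcases mul_eq_zero.mp this with h | h
      · exact absurd h hm1
      · exact h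
    exact hρ (hroots ρ (mem_roots'.mpr ⟨hg0, hgρ⟩))
  -- (2) degree bound
  have hdeg1 : g1.natDegree ≤ m := by
    rw [natDegree_le_iff_coeff_eq_zero]
    intro N hN
    rw [hg1, coeff_polar_poly _ _ _ _ (by omega)]
    rcases eq_or_lt_of_le (Nat.succ_le_of_lt hN) with heq | hlt
    · -- N = m + 1
      have hgN1 : g.coeff (N+1) = 0 := coeff_eq_zero_of_natDegree_lt (by omega)
      rw [hgN1, ← heq]
      push_cast
      ring
    · have hgN : g.coeff N = 0 := coeff_eq_zero_of_natDegree_lt (by omega)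
      have hgN1 : g.coeff (N+1) = 0 := coeff_eq_zero_of_natDegree_lt (by omega)
      rw [hgN, hgN1]
      ring
  -- (3) roots in D
  have hroots1 : ∀ r ∈ g1.roots, Dmem r := by
    intro r hr
    by_contra hrD
    have hr0 : g1.eval r = 0 := isRoot_of_mem_roots hr
    have hgr : g.eval r ≠ 0 := by
      intro h
      exact hrD (hroots r (mem_roots'.mpr ⟨hg0, h⟩))
    have hrρ : r ≠ ρ := by
      intro h
      rw [heval1 r, h, sub_self, zero_mul, add_zero] at hr0
      rcases mul_eq_zero.mp hr0 with h' | h'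
      · exact absurd h' hm1
      · rw [h] at hgr; exact hgr h'
    have heval : ((m:ℂ)+1) * g.eval r + (ρ - r) * (derivative g).eval r = 0 := by
      rw [← heval1 r]; exact hr0
    have hwne : ∀ z ∈ g.roots, r ≠ z := by
      intro z hz h
      exact hgr (by rw [h]; exact isRoot_of_mem_roots hz)
    have hlog : (derivative g).eval r
        = g.eval r * (g.roots.map fun z => (r - z)⁻¹).sum := by
      have h1 : derivative g
          = C g.leadingCoeff * derivative ((g.roots.map fun a => X - C a).prod) := by
        conv_lhs => rw [← hfact]
        rw [derivative_C_mul]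
      have h2 : g.eval r = g.leadingCoeff * eval r ((g.roots.map fun a => X - C a).prod) := by
        conv_lhs => rw [← hfact]
        rw [eval_mul, eval_C]
      rw [h1, eval_mul, eval_C, eval_derivative_multiset_prod g.roots r hwne, h2]
      ring
    set S := (g.roots.map fun z => (r - z)⁻¹).sum with hS
    have hrρ' : r - ρ ≠ 0 := sub_ne_zero.mpr hrρ
    have key2 : g.eval r * ((m:ℂ)+1) = g.eval r * ((r - ρ) * S) := by
      rw [hlog] at heval
      linear_combination heval
    have key3 : ((m:ℂ)+1) = (r - ρ) * S := mul_left_cancel₀ hgr key2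
    have hsum : S = (((m+1:ℕ)):ℂ) * (r - ρ)⁻¹ := by
      push_cast
      field_simp
      linear_combination -key3
    have hcardle : Multiset.card g.roots ≤ m + 1 := by rw [hsplits]; exact hdg
    have horcard : Multiset.card g.roots = m + 1 ∨ AN := by
      rcases hor with h | h
      · exact Or.inl (by rw [hsplits, h])
      · exact Or.inr h
    have := hP r ρ (m+1) g.roots (Nat.succ_pos m) hcardle horcard hroots hrD
      (Ne.symm hrρ) (by rw [← hS]; exact hsum)
    exact hρ this
  -- (4) exact degree or AN
  have hor1 : g1.natDegree = m ∨ AN := by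
    by_cases hAN : AN
    · exact Or.inr hAN
    · left
      have hdeg' : g.natDegree = m + 1 := hor.resolve_right hAN
      have hcoeff : g1.coeff m ≠ 0 := by
        rw [hg1, coeff_polar_poly _ _ _ _ hm]
        intro hzero
        have hsum_roots : g.coeff m = g.leadingCoeff * (-1) * g.roots.sum := by
          have h := Polynomial.coeff_eq_esymm_roots_of_card hsplits
            (k := m) (by omega)
          rw [hdeg', show m+1-m = 1 by omega] at h
          rw [h, esymm_one_multiset]
          ring
        have hlead : g.coeff (m+1) = g.leadingCoeff := by rw [← hdeg']; exact coeff_natDegree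
        rw [hsum_roots, hlead] at hzero
        have hkey : g.leadingCoeff * (((m:ℂ)+1) * ρ - g.roots.sum) = 0 := by
          linear_combination hzero
        have hρval : ((m:ℂ)+1) * ρ - g.roots.sum = 0 := by
          rcases mul_eq_zero.mp hkey with h | h
          · exact absurd h hlc
          · exact h
        have hρeq : ρ = g.roots.sum / (((m+1:ℕ)):ℂ) := by
          push_cast
          field_simp
          linear_combination hρval
        have hcard' : Multiset.card g.roots = m+1 := by rw [hsplits, hdeg']
        have := hQ hAN (m+1) g.roots (Nat.succ_pos m) hcard' hroots
        rw [← hρeq] at this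
        exact hρ this
      exact le_antisymm hdeg1 (le_natDegree_of_ne_zero hcoeff)
  exact ⟨hg10, hdeg1, hroots1, hor1⟩


theorem grace
    (hP : ∀ (w ζ : ℂ) (m : ℕ) (M : Multiset ℂ), 0 < m → Multiset.card M ≤ m →
      (Multiset.card M = m ∨ AN) → (∀ z ∈ M, Dmem z) → ¬ Dmem w → ζ ≠ w →
      (M.map fun z => (w - z)⁻¹).sum = (m : ℂ) * (w - ζ)⁻¹ → Dmem ζ)
    (hQ : ¬ AN → ∀ (m : ℕ) (M : Multiset ℂ), 0 < m → Multiset.card M = m →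
      (∀ z ∈ M, Dmem z) → Dmem (M.sum / (m:ℂ))) :
    ∀ (m : ℕ), 1 ≤ m → ∀ f g : Polynomial ℂ, f.Monic → f.natDegree = m →
      (∀ r ∈ f.roots, ¬ Dmem r) → g ≠ 0 → g.natDegree ≤ m →
      (∀ r ∈ g.roots, Dmem r) → (g.natDegree = m ∨ AN) →
      (Bp m f g).eval 0 ≠ 0 := by
  intro m hm
  induction m, hm using Nat.le_induction with
  | base =>
      intro f g hmon hdeg hfr hg0 hdg hgr hor
      have hf1 : f = X + C (f.coeff 0) := hmon.eq_X_add_C hdeg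
      set a : ℂ := -(f.coeff 0) with ha
      have hfa : f.eval a = 0 := by rw [hf1]; simp [ha]
      have haD : ¬ Dmem a := hfr a (mem_roots'.mpr ⟨hmon.ne_zero, hfa⟩)
      have hga : g.eval a ≠ 0 := by
        intro h
        exact haD (hgr a (mem_roots'.mpr ⟨hg0, h⟩))
      have hderiv : derivative f = 1 := by rw [hf1]; simp
      have hval : (Bp 1 f g).eval a = - g.eval a := by
        unfold Bp
        rw [Finset.sum_range_succ, Finset.sum_range_one]
        simp [hfa, hderiv]
      rw [Bp_eval_eq (le_of_eq hdeg) hdg 0 a, hval]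
      exact neg_ne_zero.mpr hga
  | succ m hm ih =>
      intro f g hmon hdeg hfr hg0 hdg hgr hor
      intro h0
      -- find a root of f
      have hdpos : 0 < f.degree := by
        rw [degree_eq_natDegree hmon.ne_zero, hdeg]
        exact_mod_cast Nat.succ_pos m
      obtain ⟨ρ, hρroot⟩ := Complex.exists_root hdpos
      set f₁ := f /ₘ (X - C ρ) with hf₁
      have hfact : (X - C ρ) * f₁ = f := (mul_divByMonic_eq_iff_isRoot).mpr hρroot
      have hf₁0 : f₁ ≠ 0 := by
        intro h
        rw [h, mul_zero] at hfact
        exact hmon.ne_zero hfact.symm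
      have hmon₁ : f₁.Monic := (monic_X_sub_C ρ).of_mul_monic_left (by rw [hfact]; exact hmon)
      have hdeg₁ : f₁.natDegree = m := by
        have hX0 : (X - C ρ) ≠ 0 := (monic_X_sub_C ρ).ne_zero
        have := natDegree_mul hX0 hf₁0
        rw [hfact, natDegree_X_sub_C, hdeg] at this
        omega
      have hρD : ¬ Dmem ρ := hfr ρ (mem_roots'.mpr ⟨hmon.ne_zero, hρroot⟩)
      have hroots₁ : ∀ r ∈ f₁.roots, ¬ Dmem r := by
        intro r hr
        apply hfr r
        have hdvd : f₁ ∣ f := Dvd.intro_left _ hfact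
        exact Multiset.mem_of_le (roots.le_of_dvd hmon.ne_zero hdvd) hr
      -- chain of identities
      have e1 : (Bp (m+1) f g).eval ρ = 0 := by
        rw [Bp_eval_eq (le_of_eq hdeg) hdg ρ 0]
        exact h0
      have e2 : (Bp (m+1) g f).eval ρ = 0 := by
        rw [Bp_swap, eval_mul, eval_C, e1, mul_zero]
      have e3 : (Bp m (C ((m:ℂ)+1) * g + (C ρ - X) * derivative g) f₁).eval ρ = 0 := by
        rw [← Bp_polar_eval m g f₁ ρ, hfact]
        exact e2
      have e4 : (Bp m f₁ (C ((m:ℂ)+1) * g + (C ρ - X) * derivative g)).eval ρ = 0 := by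
        rw [Bp_swap, eval_mul, eval_C, e3, mul_zero]
      obtain ⟨hg10, hdeg1, hroots1, hor1⟩ :=
        laguerre Dmem AN hP hQ m hm g hg0 hdg hgr hor ρ hρD
      have e5 : (Bp m f₁ (C ((m:ℂ)+1) * g + (C ρ - X) * derivative g)).eval 0 = 0 := by
        rw [Bp_eval_eq (le_of_eq hdeg₁) hdeg1 0 ρ]
        exact e4
      exact ih f₁ (C ((m:ℂ)+1) * g + (C ρ - X) * derivative g)
        hmon₁ hdeg₁ hroots₁ hg10 hdeg1 hroots1 hor1 e5


end Grace

lemma symFun_eq_apol (n : ℕ) (f : Polynomial ℂ) (y : Fin n → ℂ) :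
    symFun f y = apol n f (∏ j, (X - C (y j))) := by
  unfold symFun apol
  simp only [Fintype.card_fin]
  apply Finset.sum_congr rfl
  intro k hk
  have hk' : k ≤ n := Nat.lt_succ_iff.mp (Finset.mem_range.mp hk)
  have hprod : (∏ j, (X - C (y j)))
      = ((Finset.univ.val.map y).map (fun t => X - C t)).prod := by
    rw [Finset.prod_eq_multiset_prod, Multiset.map_map]
    rfl
  have hcard : Multiset.card (Finset.univ.val.map y) = n := by
    rw [Multiset.card_map]
    simp
  have hcoeff : (∏ j, (X - C (y j))).coeff (n - k)
      = (-1:ℂ)^k * (Finset.univ.val.map y).esymm k := by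
    rw [hprod, Multiset.prod_X_sub_C_coeff _ (by rw [hcard]; omega)]
    rw [hcard, show n - (n-k) = k by omega]
  have hesymm : MvPolynomial.eval y (MvPolynomial.esymm (Fin n) ℂ k)
      = (Finset.univ.val.map y).esymm k := by
    have h := MvPolynomial.aeval_esymm_eq_multiset_esymm (σ := Fin n) (R := ℂ) (S := ℂ) k y
    rw [← h]
    rw [← MvPolynomial.coe_aeval_eq_eval]
    rfl
  rw [hcoeff, hesymm]
  have hsq : (-1:ℂ)^k * (-1:ℂ)^k = 1 := by
    rw [← pow_add]
    exact Even.neg_one_pow ⟨k, rfl⟩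
  linear_combination (-(((n.choose k : ℂ))⁻¹ * f.coeff k *
    (Finset.univ.val.map y).esymm k)) * hsq

end WalshAux

open WalshAux

/-- Walsh's Coincidence Theorem. -/
theorem stmt_1 (D : Set ℂ) (hD : IsCircularDomain D) (n : ℕ) (hn : 1 ≤ n)
    (f : Polynomial ℂ) (hmon : f.Monic) (hdeg : f.natDegree = n)
    (hnoroot : ∀ z ∈ D, f.eval z ≠ 0)
    (y : Fin n → ℂ) (hy : ∀ k, y k ∈ D) :
    symFun f y ≠ 0 := by
  obtain ⟨α, γ, β, hDeq⟩ := hD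
  set g := ∏ j, (X - C (y j)) with hg
  have hgmon : g.Monic := monic_prod_of_monic _ _ (fun j _ => monic_X_sub_C (y j))
  have hgdeg : g.natDegree = n := by
    rw [hg, natDegree_prod _ _ (fun j _ => (monic_X_sub_C (y j)).ne_zero)]
    simp [natDegree_X_sub_C]
  have hfroots : ∀ r ∈ f.roots, ¬ (r ∈ D) :=
    fun r hr hrD => hnoroot r hrD (isRoot_of_mem_roots hr)
  have hgroots : ∀ r ∈ g.roots, r ∈ D := by
    intro r hr
    have h0 : g.eval r = 0 := isRoot_of_mem_roots hr
    rw [hg, eval_prod] at h0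
    obtain ⟨j, _, hj⟩ := Finset.prod_eq_zero_iff.mp h0
    simp only [eval_sub, eval_X, eval_C, sub_eq_zero] at hj
    rw [hj]
    exact hy j
  have key : (Bp n f g).eval 0 ≠ 0 := by
    rcases hDeq with h | h
    · have hmemD : ∀ z : ℂ, (z ∈ D) ↔ (qf α γ β z < 0) := by
        intro z
        rw [h]
        exact Iff.rfl
      exact grace (fun z => qf α γ β z < 0) (α < 0) (hP_lt α γ β)
        (fun hAN => hQ_lt α γ β (not_lt.mp hAN))
        n hn f g hmon hdeg
        (fun r hr hq => hfroots r hr ((hmemD r).mpr hq))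
        hgmon.ne_zero (le_of_eq hgdeg)
        (fun r hr => (hmemD r).mp (hgroots r hr)) (Or.inl hgdeg)
    · have hmemD : ∀ z : ℂ, (z ∈ D) ↔ (qf α γ β z ≤ 0) := by
        intro z
        rw [h]
        exact Iff.rfl
      exact grace (fun z => qf α γ β z ≤ 0) (α < 0) (hP_le α γ β)
        (fun hAN => hQ_le α γ β (not_lt.mp hAN))
        n hn f g hmon hdeg
        (fun r hr hq => hfroots r hr ((hmemD r).mpr hq))
        hgmon.ne_zero (le_of_eq hgdeg)
        (fun r hr => (hmemD r).mp (hgroots r hr)) (Or.inl hgdeg)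
  intro hsym
  rw [symFun_eq_apol n f y, ← hg] at hsym
  exact key (by rw [Bp_eval_zero, hsym, mul_zero])
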